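/- In the 3×3 matrix representation of the extended Heisenberg algebra, the image R of the quantum R-matrix exp(−(α/2)(J̃⊗S̃ + S̃⊗J̃))·exp(α e^{(α/4)S̃}Z ⊗ e^{−(α/4)S̃}Z̄) equals 1⊗1 + α·ρ⊗ρ(r/a) exactly, where r = −(a/2)(S̃⊗J̃+J̃⊗S̃) + a Z⊗Z̄; i.e. the expansion of R in α terminates at first order. -/

import Mathlib

open NormedSpace Matrix Kronecker

/-- `ρ(J̃) = E₂₂` in the 3×3 matrix representation. -/
def rhoJ : Matrix (Fin 3) (Fin 3) ℝ := Matrix.single 1 1 1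
/-- `ρ(Z) = E₁₂`. -/
def rhoZ : Matrix (Fin 3) (Fin 3) ℝ := Matrix.single 0 1 1
/-- `ρ(Z̄) = E₂₃`. -/
def rhoZbar : Matrix (Fin 3) (Fin 3) ℝ := Matrix.single 1 2 1
/-- `ρ(S̃) = E₁₃`. -/
def rhoS : Matrix (Fin 3) (Fin 3) ℝ := Matrix.single 0 2 1

lemma exp_of_sq_zero {n : Type*} [Fintype n] [DecidableEq n]
    (A : Matrix n n ℝ) (h : A * A = 0) : exp A = 1 + A := by
  rw [exp_eq_tsum ℝ]
  beta_reduce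
  have hpow : ∀ m, 2 ≤ m → A ^ m = 0 := by
    intro m hm
    obtain ⟨k, rfl⟩ := Nat.exists_eq_add_of_le hm
    rw [pow_add, pow_two, h, zero_mul]
  rw [tsum_eq_sum (s := Finset.range 2) (by
    intro b hb
    rw [hpow b (by simp at hb; omega), smul_zero])]
  simp [Finset.sum_range_succ]

theorem quantum_R_matrix_linear_in_alpha (α : ℝ) :
    exp ((-(α / 2)) • (rhoJ ⊗ₖ rhoS + rhoS ⊗ₖ rhoJ)) *
      exp (α • ((exp ((α / 4) • rhoS) * rhoZ) ⊗ₖ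
        (exp ((-(α / 4)) • rhoS) * rhoZbar))) =
    (1 : Matrix (Fin 3 × Fin 3) (Fin 3 × Fin 3) ℝ) +
      α • ((-(1 / 2 : ℝ)) • (rhoS ⊗ₖ rhoJ + rhoJ ⊗ₖ rhoS) + rhoZ ⊗ₖ rhoZbar) := by
  have hSS : rhoS * rhoS = 0 := by
    simp only [rhoS]; exact Matrix.single_mul_single_of_ne (h := (by decide : (2 : Fin 3) ≠ 0)) ..
  have hSZ : rhoS * rhoZ = 0 := by
    simp only [rhoS, rhoZ]; exact Matrix.single_mul_single_of_ne (h := (by decide : (2 : Fin 3) ≠ 0)) ..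
  have hSZbar : rhoS * rhoZbar = 0 := by
    simp only [rhoS, rhoZbar]; exact Matrix.single_mul_single_of_ne (h := (by decide : (2 : Fin 3) ≠ 1)) ..
  have hJS : rhoJ * rhoS = 0 := by
    simp only [rhoJ, rhoS]; exact Matrix.single_mul_single_of_ne (h := (by decide : (1 : Fin 3) ≠ 0)) ..
  have hSJ : rhoS * rhoJ = 0 := by
    simp only [rhoS, rhoJ]; exact Matrix.single_mul_single_of_ne (h := (by decide : (2 : Fin 3) ≠ 1)) ..
  have hJZ : rhoJ * rhoZ = 0 := by
    simp only [rhoJ, rhoZ]; exact Matrix.single_mul_single_of_ne (h := (by decide : (1 : Fin 3) ≠ 0)) ..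
  have hZZ : rhoZ * rhoZ = 0 := by
    simp only [rhoZ]; exact Matrix.single_mul_single_of_ne (h := (by decide : (1 : Fin 3) ≠ 0)) ..
  -- exponentials of scalar multiples of rhoS
  have e1 : exp ((α / 4) • rhoS) = 1 + (α / 4) • rhoS := by
    apply exp_of_sq_zero
    rw [smul_mul_smul_comm, hSS, smul_zero]
  have e2 : exp ((-(α / 4)) • rhoS) = 1 + (-(α / 4)) • rhoS := by
    apply exp_of_sq_zero
    rw [smul_mul_smul_comm, hSS, smul_zero]
  have f1 : exp ((α / 4) • rhoS) * rhoZ = rhoZ := by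
    rw [e1, add_mul, one_mul, smul_mul_assoc, hSZ, smul_zero, add_zero]
  have f2 : exp ((-(α / 4)) • rhoS) * rhoZbar = rhoZbar := by
    rw [e2, add_mul, one_mul, smul_mul_assoc, hSZbar, smul_zero, add_zero]
  rw [f1, f2]
  set M : Matrix (Fin 3 × Fin 3) (Fin 3 × Fin 3) ℝ := rhoJ ⊗ₖ rhoS + rhoS ⊗ₖ rhoJ with hM
  have hMM : M * M = 0 := by
    rw [hM, add_mul, mul_add, mul_add, ← Matrix.mul_kronecker_mul,
      ← Matrix.mul_kronecker_mul, ← Matrix.mul_kronecker_mul, ← Matrix.mul_kronecker_mul,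
      hSS, hJS, hSJ]
    simp
  have hN : (rhoZ ⊗ₖ rhoZbar) * (rhoZ ⊗ₖ rhoZbar) = 0 := by
    rw [← Matrix.mul_kronecker_mul, hZZ, Matrix.zero_kronecker]
  have hMN : M * (rhoZ ⊗ₖ rhoZbar) = 0 := by
    rw [hM, add_mul, ← Matrix.mul_kronecker_mul, ← Matrix.mul_kronecker_mul, hJZ, hSZ]
    simp
  have g1 : exp ((-(α / 2)) • M) = 1 + (-(α / 2)) • M := by
    apply exp_of_sq_zero
    rw [smul_mul_smul_comm, hMM, smul_zero]
  have g2 : exp (α • (rhoZ ⊗ₖ rhoZbar)) = 1 + α • (rhoZ ⊗ₖ rhoZbar) := by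
    apply exp_of_sq_zero
    rw [smul_mul_smul_comm, hN, smul_zero]
  rw [g1, g2, add_mul, mul_add, mul_add, one_mul, mul_one, smul_mul_smul_comm, hMN,
    smul_zero, add_zero, hM]
  simp only [one_mul, mul_one]
  module
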